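/- Standard representation: let ≻ be an admissible ordering and G a standard basis of the difference ideal I. Then every nonzero f ∈ I admits a finite representation f = Σ a_{g,θ} · σ^θ(g), where the sum ranges over finitely many pairs (g, θ) with g ∈ G and θ ∈ Θ, the coefficients a_{g,θ} ∈ R are nonzero, and for every summand lm(a_{g,θ} · σ^θ(g)) ≼ lm(f). -/

import Mathlib

/-- The free commutative monoid of shifts `Θ`. -/
abbrev Shift (n : ℕ) := Fin n → ℕ

/-- The set of difference variables `V = Θ × Fin m`. -/
abbrev DVar (n m : ℕ) := (Fin n → ℕ) × Fin m

/-- The additive commutative monoid of difference monomials `M = V →₀ ℕ`. -/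
abbrev DMon (n m : ℕ) := DVar n m →₀ ℕ

/-- Action of a shift `θ` on a difference variable: `θ • (θ', α) = (θ + θ', α)`. -/
def shiftV {n m : ℕ} (θ : Shift n) (v : DVar n m) : DVar n m := (θ + v.1, v.2)

/-- Action of a shift `θ` on a difference monomial. -/
noncomputable def shiftM {n m : ℕ} (θ : Shift n) (w : DMon n m) : DMon n m :=
  Finsupp.mapDomain (shiftV θ) w

/-- Divisibility of difference monomials: `v ∣ w` iff `w = t + θ • v`. -/
def MDvd {n m : ℕ} (v w : DMon n m) : Prop :=
  ∃ (t : DMon n m) (θ : Shift n), w = t + shiftM θ v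

/-- The action of the shift `θ` on the difference polynomial ring
`R = MvPolynomial (DVar n m) K`: the ring endomorphism `σ^θ` applying the given
endomorphism `σK θ` of `K` to coefficients and `θ • ·` to variables. -/
noncomputable def sigmaR {n m : ℕ} {K : Type} [Field K] (σK : Shift n → (K →+* K))
    (θ : Shift n) :
    MvPolynomial (DVar n m) K →+* MvPolynomial (DVar n m) K :=
  MvPolynomial.eval₂Hom (MvPolynomial.C.comp (σK θ)) fun v => MvPolynomial.X (shiftV θ v)

/-- An admissible ordering on difference monomials: a (strict) linear order `lt` such that
`m ≻ 0` for `m ≠ 0`, compatible with addition of monomials and the action of shifts,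
and extending a ranking on the variables. -/
structure Admissible (n m : ℕ) where
  lt : DMon n m → DMon n m → Prop
  irrefl : ∀ a, ¬ lt a a
  trans : ∀ a b c, lt a b → lt b c → lt a c
  trichotomy : ∀ a b, lt a b ∨ a = b ∨ lt b a
  pos : ∀ a : DMon n m, a ≠ 0 → lt 0 a
  compat : ∀ (v w t : DMon n m) (θ : Shift n), lt v w ↔ lt (t + shiftM θ v) (t + shiftM θ w)
  ranking : ∀ (θ : Shift n) (i : Fin n) (α : Fin m),
    lt (Finsupp.single (θ, α) 1) (Finsupp.single (θ + Pi.single i 1, α) 1)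

/-- `w` is the leading monomial of `f` w.r.t. the ordering `ord`:
it occurs in `f` and is `ord`-greater than any other monomial of `f`. -/
def IsLm {n m : ℕ} {K : Type} [Field K] (ord : Admissible n m)
    (f : MvPolynomial (DVar n m) K) (w : DMon n m) : Prop :=
  w ∈ f.support ∧ ∀ w' ∈ f.support, w' ≠ w → ord.lt w' w

/-- `f` is monic: its leading coefficient equals `1`. -/
def IsMonicP {n m : ℕ} {K : Type} [Field K] (ord : Admissible n m)
    (f : MvPolynomial (DVar n m) K) : Prop :=
  ∃ w, IsLm ord f w ∧ f.coeff w = 1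

/-- Elementary reduction step modulo the set `F`: for some `q ∈ F` with leading monomial
`lq`, and a monomial `w = t + θ • lq` occurring in `p` with coefficient `c`, subtract
`c · X^t · σ^θ(q)` from `p`, thereby removing the monomial `w`. -/
def RedStep {n m : ℕ} {K : Type} [Field K] (σK : Shift n → (K →+* K)) (ord : Admissible n m)
    (F : Set (MvPolynomial (DVar n m) K)) (p r : MvPolynomial (DVar n m) K) : Prop :=
  ∃ q ∈ F, ∃ lq, IsLm ord q lq ∧ ∃ (t : DMon n m) (θ : Shift n),
    (t + shiftM θ lq) ∈ p.support ∧
    r = p - MvPolynomial.monomial t (p.coeff (t + shiftM θ lq)) * sigmaR σK θ q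

/-- `r` is in normal form modulo `F`: no monomial of `r` is divisible by the
leading monomial of any element of `F`. -/
def InNormalForm {n m : ℕ} {K : Type} [Field K] (ord : Admissible n m)
    (F : Set (MvPolynomial (DVar n m) K)) (r : MvPolynomial (DVar n m) K) : Prop :=
  ∀ w ∈ r.support, ¬ ∃ q ∈ F, ∃ lq, IsLm ord q lq ∧ MDvd lq w

/-- `r` is a normal form of `p` modulo `G`: `r` is reached from `p` by finitely many
elementary reduction steps modulo elements of `G` and `r` is in normal form modulo `G`. -/
def IsNormalFormOf {n m : ℕ} {K : Type} [Field K] (σK : Shift n → (K →+* K))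
    (ord : Admissible n m) (G : Set (MvPolynomial (DVar n m) K))
    (p r : MvPolynomial (DVar n m) K) : Prop :=
  Relation.ReflTransGen (RedStep σK ord G) p r ∧ InNormalForm ord G r

/-- The smallest difference ideal `[F]` containing `F`: the ideal generated by
all shifts `σ^θ f` of elements `f ∈ F`. -/
noncomputable def diffIdealS {n m : ℕ} {K : Type} [Field K] (σK : Shift n → (K →+* K))
    (F : Set (MvPolynomial (DVar n m) K)) : Ideal (MvPolynomial (DVar n m) K) :=
  Ideal.span { g | ∃ (θ : Shift n) (f : MvPolynomial (DVar n m) K), f ∈ F ∧ g = sigmaR σK θ f }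

/-- An ideal `I ⊆ R` is a difference ideal if it is stable under all shifts `σ^θ`. -/
def IsDiffIdeal {n m : ℕ} {K : Type} [Field K] (σK : Shift n → (K →+* K))
    (I : Ideal (MvPolynomial (DVar n m) K)) : Prop :=
  ∀ (θ : Shift n), ∀ f ∈ I, sigmaR σK θ f ∈ I

/-- `s` is an S-polynomial associated to the monic nonzero polynomials `p` and `q`:
`s = X^{t₁} · σ^{θ₁}(p) − X^{t₂} · σ^{θ₂}(q)` where `t₁ + θ₁ • lm(p) = t₂ + θ₂ • lm(q)`
and this common monomial is minimal with respect to divisibility among all common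
multiples of `lm(p)` and `lm(q)` of this form. -/
def IsSPoly {n m : ℕ} {K : Type} [Field K] (σK : Shift n → (K →+* K)) (ord : Admissible n m)
    (p q s : MvPolynomial (DVar n m) K) : Prop :=
  ∃ lp lq, IsLm ord p lp ∧ IsLm ord q lq ∧
    ∃ (t₁ : DMon n m) (θ₁ : Shift n) (t₂ : DMon n m) (θ₂ : Shift n),
      t₁ + shiftM θ₁ lp = t₂ + shiftM θ₂ lq ∧
      (∀ (t₁' : DMon n m) (θ₁' : Shift n) (t₂' : DMon n m) (θ₂' : Shift n),
        t₁' + shiftM θ₁' lp = t₂' + shiftM θ₂' lq →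
        MDvd (t₁' + shiftM θ₁' lp) (t₁ + shiftM θ₁ lp) →
        t₁' + shiftM θ₁' lp = t₁ + shiftM θ₁ lp) ∧
      s = MvPolynomial.monomial t₁ (1 : K) * sigmaR σK θ₁ p
          - MvPolynomial.monomial t₂ (1 : K) * sigmaR σK θ₂ q

/-- `G` is a (difference) standard basis of the ideal `I`: `[G] = I` and the leading
monomial of every nonzero element of `I` is divisible by the leading monomial of
some element of `G`. -/
def IsStandardBasis {n m : ℕ} {K : Type} [Field K] (σK : Shift n → (K →+* K))
    (ord : Admissible n m) (G : Set (MvPolynomial (DVar n m) K))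
    (I : Ideal (MvPolynomial (DVar n m) K)) : Prop :=
  diffIdealS σK G = I ∧
  ∀ f ∈ I, f ≠ 0 → ∃ g ∈ G, ∃ lg lf, IsLm ord g lg ∧ IsLm ord f lf ∧ MDvd lg lf

section StdRepAux

open MvPolynomial

variable {n m : ℕ}

/-- Weak (non-strict) version of the admissible order. -/
def ole (ord : Admissible n m) (a b : DMon n m) : Prop := a = b ∨ ord.lt a b

lemma ole_trans (ord : Admissible n m) {a b c : DMon n m}
    (h1 : ole ord a b) (h2 : ole ord b c) : ole ord a c := by
  rcases h1 with rfl | h1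
  · exact h2
  rcases h2 with rfl | h2
  · exact Or.inr h1
  · exact Or.inr (ord.trans _ _ _ h1 h2)

lemma shiftV_zero (v : DVar n m) : shiftV (0 : Shift n) v = v := by
  simp [shiftV]

lemma shiftM_zero (w : DMon n m) : shiftM (0 : Shift n) w = w := by
  have h : shiftV (0 : Shift n) = (id : DVar n m → DVar n m) := funext shiftV_zero
  rw [shiftM, h, Finsupp.mapDomain_id]

lemma shiftV_inj (θ : Shift n) : Function.Injective (shiftV (m := m) θ) := by
  rintro ⟨a, α⟩ ⟨b, β⟩ h
  simp only [shiftV, Prod.mk.injEq] at h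
  exact Prod.ext (add_left_cancel h.1) h.2

lemma shiftM_inj (θ : Shift n) :
    Function.Injective (shiftM (n := n) (m := m) θ) :=
  Finsupp.mapDomain_injective (shiftV_inj θ)

lemma lt_addL (ord : Admissible n m) {v w : DMon n m} (t : DMon n m)
    (h : ord.lt v w) : ord.lt (t + v) (t + w) := by
  have := (ord.compat v w t 0).1 h
  rwa [shiftM_zero, shiftM_zero] at this

lemma lt_addR (ord : Admissible n m) {v w : DMon n m} (t : DMon n m)
    (h : ord.lt v w) : ord.lt (v + t) (w + t) := by
  rw [add_comm v t, add_comm w t]; exact lt_addL ord t h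

lemma ole_addL (ord : Admissible n m) {v w : DMon n m} (t : DMon n m)
    (h : ole ord v w) : ole ord (t + v) (t + w) := by
  rcases h with rfl | h
  · exact Or.inl rfl
  · exact Or.inr (lt_addL ord t h)

lemma ole_add (ord : Admissible n m) {a b c d : DMon n m}
    (h1 : ole ord a b) (h2 : ole ord c d) : ole ord (a + c) (b + d) := by
  refine ole_trans ord (b := b + c) ?_ (ole_addL ord b h2)
  rcases h1 with rfl | h1
  · exact Or.inl rfl
  · exact Or.inr (lt_addR ord c h1)

lemma ole_zero (ord : Admissible n m) (a : DMon n m) : ole ord 0 a := by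
  by_cases h : a = 0
  · exact Or.inl h.symm
  · exact Or.inr (ord.pos a h)

lemma ole_self_add (ord : Admissible n m) (t a : DMon n m) : ole ord a (t + a) := by
  have := ole_add ord (ole_zero ord t) (Or.inl (rfl : a = a))
  rwa [zero_add] at this

lemma single_le_shift (ord : Admissible n m) (d θ : Shift n) (α : Fin m) :
    ole ord (Finsupp.single ((θ, α) : DVar n m) 1)
      (Finsupp.single ((θ + d, α) : DVar n m) 1) := by
  have key : ∀ (N : ℕ) (d : Shift n), (∑ i, d i) = N → ∀ θ : Shift n, ∀ α : Fin m,
      ole ord (Finsupp.single ((θ, α) : DVar n m) 1)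
        (Finsupp.single ((θ + d, α) : DVar n m) 1) := by
    intro N
    induction N with
    | zero =>
      intro d hd θ α
      have hd0 : d = 0 := by
        funext i
        exact (Finset.sum_eq_zero_iff.1 hd) i (Finset.mem_univ i)
      rw [hd0, add_zero]
      exact Or.inl rfl
    | succ N IH =>
      intro d hd θ α
      have hne : ∃ i, d i ≠ 0 := by
        by_contra h
        push_neg at h
        have : (∑ i, d i) = 0 := Finset.sum_eq_zero fun i _ => h i
        omega
      obtain ⟨i, hi⟩ := hne
      set d' : Shift n := Function.update d i (d i - 1) with hd'
      have hdd : d = d' + Pi.single i 1 := by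
        funext j
        by_cases hj : j = i
        · subst hj
          simp only [hd', Pi.add_apply, Function.update_self, Pi.single_eq_same]
          omega
        · simp [hd', Function.update_of_ne hj, Pi.single_eq_of_ne hj]
      have hsum : (∑ j, d' j) = N := by
        have h2 : (∑ j, d j) = (∑ j, d' j) + (∑ j, (Pi.single i 1 : Shift n) j) := by
          rw [hdd, ← Finset.sum_add_distrib]
          rfl
        have h3 : (∑ j, (Pi.single i 1 : Shift n) j) = 1 := by
          simp [Finset.sum_pi_single']
        omega
      have h1 := IH d' hsum θ α
      have h2 : ord.lt (Finsupp.single ((θ + d', α) : DVar n m) 1)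
          (Finsupp.single ((θ + d' + Pi.single i 1, α) : DVar n m) 1) :=
        ord.ranking (θ + d') i α
      have h3 : θ + d = θ + d' + Pi.single i 1 := by rw [hdd, add_assoc]
      rw [h3]
      exact ole_trans ord h1 (Or.inr h2)
  exact key _ d rfl θ α

/-- Weak order on variables induced by the admissible order. -/
def vle (ord : Admissible n m) (v w : DVar n m) : Prop :=
  ole ord (Finsupp.single v 1) (Finsupp.single w 1)

lemma vle_pwo (ord : Admissible n m) :
    (Set.univ : Set (DVar n m)).PartiallyWellOrderedOn (vle ord) := by
  have h1 : (Set.univ : Set (Shift n)).IsPWO :=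
    by
      have := Set.IsPWO.pi (ι := Fin n) (α := fun _ => ℕ) (s := fun _ => Set.univ)
        (fun _ => (Set.isWF_univ_iff.2 inferInstance).isPWO)
      rwa [Set.pi_univ] at this
  have h2 : (Set.univ : Set (Fin m)).PartiallyWellOrderedOn (Eq : Fin m → Fin m → Prop) :=
    Set.finite_univ.partiallyWellOrderedOn
  have h3 := Set.PartiallyWellOrderedOn.prod (r := ((· ≤ ·) : Shift n → Shift n → Prop)) (r' := (Eq : Fin m → Fin m → Prop)) h1 h2
  intro f0
  obtain ⟨f, hf⟩ : ∃ f : ℕ → DVar n m, ∀ k, f k = (f0 k).1 := ⟨_, fun _ => rfl⟩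
  obtain ⟨i, j, hij, hrel⟩ := h3 (fun k => ⟨f k, by simp⟩)
  refine ⟨i, j, hij, ?_⟩
  show vle ord (f0 i).1 (f0 j).1
  rw [← hf, ← hf]
  obtain ⟨hle, heq⟩ := hrel
  have hfj : f j = ((f i).1 + (fun k => (f j).1 k - (f i).1 k), (f i).2) := by
    refine Prod.ext ?_ heq.symm
    funext k
    have hk : (f i).1 k ≤ (f j).1 k := hle k
    simp only [Pi.add_apply]
    omega
  have h4 := single_le_shift ord (fun k => (f j).1 k - (f i).1 k) (f i).1 (f i).2
  rw [vle]
  rw [show f i = ((f i).1, (f i).2) from rfl, hfj]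
  exact h4

/-- Sum of variables of a list as a difference monomial. -/
noncomputable def msum (l : List (DVar n m)) : DMon n m :=
  (l.map fun v => Finsupp.single v 1).sum

lemma msum_cons (a : DVar n m) (l : List (DVar n m)) :
    msum (a :: l) = Finsupp.single a 1 + msum l := by
  simp [msum]

lemma msum_mono (ord : Admissible n m) {l l' : List (DVar n m)}
    (h : List.SublistForall₂ (vle ord) l l') : ole ord (msum l) (msum l') := by
  induction h with
  | nil => exact ole_zero ord _
  | cons hab _ ih =>
    rw [msum_cons, msum_cons]
    exact ole_add ord hab ih
  | cons_right _ ih =>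
    rw [msum_cons]
    exact ole_trans ord ih (ole_self_add ord _ _)

lemma msum_exists (w : DMon n m) : ∃ l : List (DVar n m), msum l = w := by
  induction w using Finsupp.induction with
  | zero => exact ⟨[], rfl⟩
  | single_add a b f _ _ ih =>
    obtain ⟨l, hl⟩ := ih
    refine ⟨List.replicate b a ++ l, ?_⟩
    have hrep : ∀ b : ℕ, msum (List.replicate b a) = Finsupp.single a b := by
      intro b
      induction b with
      | zero => simp [msum]
      | succ b ihb =>
        rw [List.replicate_succ, msum_cons, ihb, ← Finsupp.single_add]
        congr 1
        omega
    have happ : msum (List.replicate b a ++ l)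
        = msum (List.replicate b a) + msum l := by
      simp [msum]
    rw [happ, hrep, hl]

lemma ord_wf (ord : Admissible n m) : WellFounded ord.lt := by
  haveI : IsTrans (DMon n m) ord.lt := ⟨ord.trans⟩
  haveI : IsIrrefl (DMon n m) ord.lt := ⟨ord.irrefl⟩
  haveI : IsStrictOrder (DMon n m) ord.lt := ⟨⟩
  rw [RelEmbedding.wellFounded_iff_isEmpty]
  constructor
  intro emb
  choose l hl using fun k => msum_exists (n := n) (m := m) (emb k)
  haveI : IsRefl (DVar n m) (vle ord) := ⟨fun _ => Or.inl rfl⟩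
  haveI : IsTrans (DVar n m) (vle ord) := ⟨fun _ _ _ => ole_trans ord⟩
  haveI : IsPreorder (DVar n m) (vle ord) := {}
  have hig := (vle_pwo ord).partiallyWellOrderedOn_sublistForall₂
  obtain ⟨i, j, hij, hsl⟩ := hig (fun k => ⟨l k, fun x _ => Set.mem_univ x⟩)
  have hle := msum_mono ord hsl
  rw [hl, hl] at hle
  have hgt : ord.lt (emb j) (emb i) := emb.map_rel_iff.2 hij
  rcases hle with heq | hlt
  · rw [heq] at hgt
    exact ord.irrefl _ hgt
  · exact ord.irrefl _ (ord.trans _ _ _ hlt hgt)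

lemma exists_max (ord : Admissible n m) (s : Finset (DMon n m)) (hs : s.Nonempty) :
    ∃ w ∈ s, ∀ w' ∈ s, w' ≠ w → ord.lt w' w := by
  classical
  induction s using Finset.induction_on with
  | empty => exact absurd hs (by simp)
  | @insert a s ha ih =>
    rcases s.eq_empty_or_nonempty with rfl | hs'
    · refine ⟨a, by simp, ?_⟩
      intro w' hw' hne
      simp at hw'
      exact absurd hw' hne
    · obtain ⟨w, hw, hmax⟩ := ih hs'
      rcases ord.trichotomy a w with hlt | heq | hgt
      · refine ⟨w, Finset.mem_insert_of_mem hw, ?_⟩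
        intro w' hw' hne
        rcases Finset.mem_insert.1 hw' with rfl | hw's
        · exact hlt
        · exact hmax w' hw's hne
      · subst heq
        refine ⟨a, Finset.mem_insert_self _ _, ?_⟩
        intro w' hw' hne
        rcases Finset.mem_insert.1 hw' with rfl | hw's
        · exact absurd rfl hne
        · exact hmax w' hw's hne
      · refine ⟨a, Finset.mem_insert_self _ _, ?_⟩
        intro w' hw' hne
        rcases Finset.mem_insert.1 hw' with rfl | hw's
        · exact absurd rfl hne
        · by_cases hww : w' = w
          · rw [hww]; exact hgt
          · exact ord.trans _ _ _ (hmax w' hw's hww) hgt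

variable {K : Type} [Field K]

lemma exists_lm (ord : Admissible n m) {f : MvPolynomial (DVar n m) K} (hf : f ≠ 0) :
    ∃ w, IsLm ord f w := by
  have hne : f.support.Nonempty := by
    rw [Finset.nonempty_iff_ne_empty]
    intro h
    exact hf (MvPolynomial.support_eq_empty.1 h)
  obtain ⟨w, hw, hmax⟩ := exists_max ord f.support hne
  exact ⟨w, hw, hmax⟩

lemma lm_unique (ord : Admissible n m) {f : MvPolynomial (DVar n m) K} {w w' : DMon n m}
    (h : IsLm ord f w) (h' : IsLm ord f w') : w = w' := by
  by_contra hne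
  exact ord.irrefl w (ord.trans _ _ _ (h'.2 w h.1 hne) (h.2 w' h'.1 (Ne.symm hne)))

lemma sigmaR_monomial (σK : Shift n → (K →+* K)) (θ : Shift n) (w : DMon n m) (c : K) :
    sigmaR σK θ (MvPolynomial.monomial w c)
      = MvPolynomial.monomial (shiftM θ w) (σK θ c) := by
  simp only [sigmaR, MvPolynomial.coe_eval₂Hom]
  rw [MvPolynomial.eval₂_monomial, MvPolynomial.monomial_eq, shiftM,
    Finsupp.prod_mapDomain_index_inj (shiftV_inj θ)]
  rfl

lemma hexp (σK : Shift n → (K →+* K)) (θ : Shift n) (t : DMon n m) (c : K)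
    (g : MvPolynomial (DVar n m) K) :
    MvPolynomial.monomial t c * sigmaR σK θ g
      = ∑ w ∈ g.support,
          MvPolynomial.monomial (t + shiftM θ w) (c * σK θ (g.coeff w)) := by
  conv_lhs => rw [g.as_sum]
  rw [map_sum, Finset.mul_sum]
  refine Finset.sum_congr rfl fun w _ => ?_
  rw [sigmaR_monomial, MvPolynomial.monomial_mul]

lemma hcoeff (σK : Shift n → (K →+* K)) (θ : Shift n) (t : DMon n m) (c : K)
    (g : MvPolynomial (DVar n m) K) (w : DMon n m) :
    (MvPolynomial.monomial t c * sigmaR σK θ g).coeff (t + shiftM θ w)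
      = c * σK θ (g.coeff w) := by
  classical
  rw [hexp, MvPolynomial.coeff_sum]
  have hstep : ∀ w' ∈ g.support,
      (MvPolynomial.monomial (t + shiftM θ w') (c * σK θ (g.coeff w'))).coeff
          (t + shiftM θ w)
        = if w' = w then c * σK θ (g.coeff w') else 0 := by
    intro w' _
    rw [MvPolynomial.coeff_monomial]
    congr 1
    simp only [add_right_inj, eq_iff_iff]
    exact ⟨fun h => shiftM_inj θ h, fun h => by rw [h]⟩
  rw [Finset.sum_congr rfl hstep, Finset.sum_ite_eq' g.support w]
  by_cases hw : w ∈ g.support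
  · rw [if_pos hw]
  · rw [if_neg hw, MvPolynomial.notMem_support_iff.1 hw, map_zero, mul_zero]

lemma hsupp (σK : Shift n → (K →+* K)) (θ : Shift n) (t : DMon n m) (c : K)
    (g : MvPolynomial (DVar n m) K) (u : DMon n m)
    (hu : u ∈ (MvPolynomial.monomial t c * sigmaR σK θ g).support) :
    ∃ w ∈ g.support, u = t + shiftM θ w := by
  classical
  rw [MvPolynomial.mem_support_iff, hexp, MvPolynomial.coeff_sum] at hu
  obtain ⟨w, hw, hne⟩ := Finset.exists_ne_zero_of_sum_ne_zero hu
  refine ⟨w, hw, ?_⟩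
  by_contra h
  rw [MvPolynomial.coeff_monomial, if_neg (fun e => h e.symm)] at hne
  exact hne rfl

lemma lm_mul_sigma (ord : Admissible n m) (σK : Shift n → (K →+* K)) (θ : Shift n)
    {g : MvPolynomial (DVar n m) K} {lg : DMon n m} (hlm : IsLm ord g lg)
    {t : DMon n m} {c : K} (hc : c ≠ 0) :
    IsLm ord (MvPolynomial.monomial t c * sigmaR σK θ g) (t + shiftM θ lg) ∧
    (MvPolynomial.monomial t c * sigmaR σK θ g).coeff (t + shiftM θ lg)
      = c * σK θ (g.coeff lg) := by
  have hco := hcoeff σK θ t c g lg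
  have hgc : g.coeff lg ≠ 0 := MvPolynomial.mem_support_iff.1 hlm.1
  have hne : c * σK θ (g.coeff lg) ≠ 0 :=
    mul_ne_zero hc (fun h => hgc ((σK θ).injective (h.trans (map_zero (σK θ)).symm)))
  refine ⟨⟨?_, ?_⟩, hco⟩
  · rw [MvPolynomial.mem_support_iff, hco]
    exact hne
  · intro u hu hune
    obtain ⟨w, hw, rfl⟩ := hsupp σK θ t c g u hu
    have hwlg : w ≠ lg := fun e => hune (by rw [e])
    exact (ord.compat w lg t θ).1 (hlm.2 w hw hwlg)

end StdRepAux

/-- Standard representation: if `G` is a standard basis of the difference ideal `I`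
w.r.t. an admissible ordering, then every nonzero `f ∈ I` admits a finite representation
`f = Σ a_{g,θ} · σ^θ(g)` with `g ∈ G`, nonzero coefficients `a_{g,θ} ∈ R`, and
`lm(a_{g,θ} · σ^θ(g)) ≼ lm(f)` for every summand. -/
theorem standard_representation (n m : ℕ) (hn : 1 ≤ n) (hm : 1 ≤ m)
    (K : Type) [Field K] (σK : Shift n → (K →+* K))
    (hσ0 : σK 0 = RingHom.id K)
    (hσadd : ∀ a b : Shift n, σK (a + b) = (σK a).comp (σK b))
    (ord : Admissible n m)
    (I : Ideal (MvPolynomial (DVar n m) K)) (hI : IsDiffIdeal σK I)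
    (G : Set (MvPolynomial (DVar n m) K))
    (hGI : G ⊆ (I : Set (MvPolynomial (DVar n m) K)))
    (hG : ∀ g ∈ G, g ≠ 0 ∧ IsMonicP ord g)
    (hSB : IsStandardBasis σK ord G I) :
    ∀ f ∈ I, f ≠ 0 →
      ∃ (s : Finset (MvPolynomial (DVar n m) K × Shift n))
        (a : MvPolynomial (DVar n m) K × Shift n → MvPolynomial (DVar n m) K)
        (lf : DMon n m),
        IsLm ord f lf ∧
        (∀ x ∈ s, x.1 ∈ G ∧ a x ≠ 0 ∧
          ∃ l, IsLm ord (a x * sigmaR σK x.2 x.1) l ∧ (l = lf ∨ ord.lt l lf)) ∧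
        f = ∑ x ∈ s, a x * sigmaR σK x.2 x.1 := by
    classical
  have wf := ord_wf ord
  suffices H : ∀ lf : DMon n m, ∀ f, f ∈ I → IsLm ord f lf →
      ∃ (s : Finset (MvPolynomial (DVar n m) K × Shift n))
        (a : MvPolynomial (DVar n m) K × Shift n → MvPolynomial (DVar n m) K),
        (∀ x ∈ s, x.1 ∈ G ∧ a x ≠ 0 ∧
          ∃ l, IsLm ord (a x * sigmaR σK x.2 x.1) l ∧ (l = lf ∨ ord.lt l lf)) ∧
        f = ∑ x ∈ s, a x * sigmaR σK x.2 x.1 by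
    intro f hf hf0
    obtain ⟨lf, hlf⟩ := exists_lm ord hf0
    obtain ⟨s, a, h1, h2⟩ := H lf f hf hlf
    exact ⟨s, a, lf, hlf, h1, h2⟩
  intro lf0
  refine WellFounded.induction (C := fun lf => ∀ f, f ∈ I → IsLm ord f lf →
      ∃ (s : Finset (MvPolynomial (DVar n m) K × Shift n))
        (a : MvPolynomial (DVar n m) K × Shift n → MvPolynomial (DVar n m) K),
        (∀ x ∈ s, x.1 ∈ G ∧ a x ≠ 0 ∧
          ∃ l, IsLm ord (a x * sigmaR σK x.2 x.1) l ∧ (l = lf ∨ ord.lt l lf)) ∧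
        f = ∑ x ∈ s, a x * sigmaR σK x.2 x.1) wf lf0 ?_
  intro lf IH f hfI hlm
  have hf0 : f ≠ 0 := by
    intro h
    have h1 := hlm.1
    rw [h] at h1
    simp at h1
  obtain ⟨g, hgG, lg, lf', hlg, hlf', hdvd⟩ := hSB.2 f hfI hf0
  have hlfeq : lf' = lf := lm_unique ord hlf' hlm
  rw [hlfeq] at hdvd
  obtain ⟨t, θ, ht⟩ := hdvd
  obtain ⟨hgne, hmon⟩ := hG g hgG
  obtain ⟨lg', hlg', hco1⟩ := hmon
  have hlgeq : lg' = lg := lm_unique ord hlg' hlg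
  rw [hlgeq] at hco1
  set c := f.coeff lf with hc
  have hcne : c ≠ 0 := MvPolynomial.mem_support_iff.1 hlm.1
  obtain ⟨hhlm0, hhco0⟩ := lm_mul_sigma ord σK θ hlg (t := t) hcne
  rw [← ht] at hhlm0
  have hhco : (MvPolynomial.monomial t c * sigmaR σK θ g).coeff lf = c := by
    rw [ht, hhco0, hco1, map_one, mul_one]
  have hhI : MvPolynomial.monomial t c * sigmaR σK θ g ∈ I :=
    I.mul_mem_left _ (hI θ g (hGI hgG))
  by_cases hf'0 : f - MvPolynomial.monomial t c * sigmaR σK θ g = 0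
  · have hfh : f = MvPolynomial.monomial t c * sigmaR σK θ g := by
      rw [← sub_eq_zero]; exact hf'0
    refine ⟨{(g, θ)}, fun _ => MvPolynomial.monomial t c, ?_, ?_⟩
    · intro x hx
      rw [Finset.mem_singleton] at hx
      subst hx
      refine ⟨hgG, ?_, lf, hhlm0, Or.inl rfl⟩
      intro h0
      exact hcne (by rwa [MvPolynomial.monomial_eq_zero] at h0)
    · rw [Finset.sum_singleton]
      exact hfh
  · set f' := f - MvPolynomial.monomial t c * sigmaR σK θ g with hf'def
    have hf'I : f' ∈ I := I.sub_mem hfI hhI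
    obtain ⟨lf'', hlf''⟩ := exists_lm ord hf'0
    have hlf_not : f'.coeff lf = 0 := by
      rw [hf'def, MvPolynomial.coeff_sub, ← hc, hhco, sub_self]
    have hless : ∀ u ∈ f'.support, ord.lt u lf := by
      intro u hu
      have hune : u ≠ lf := by
        intro e
        rw [e] at hu
        exact MvPolynomial.mem_support_iff.1 hu hlf_not
      have hcoe : f'.coeff u ≠ 0 := MvPolynomial.mem_support_iff.1 hu
      by_cases huf : u ∈ f.support
      · exact hlm.2 u huf hune
      · have h2 : (MvPolynomial.monomial t c * sigmaR σK θ g).coeff u ≠ 0 := by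
          intro h0
          apply hcoe
          rw [hf'def, MvPolynomial.coeff_sub, MvPolynomial.notMem_support_iff.1 huf, h0,
            sub_zero]
        exact hhlm0.2 u (MvPolynomial.mem_support_iff.2 h2) hune
    have hlt'' : ord.lt lf'' lf := hless lf'' hlf''.1
    obtain ⟨s', a', hcond', hsum'⟩ := IH lf'' hlt'' f' hf'I hlf''
    set A : MvPolynomial (DVar n m) K × Shift n → MvPolynomial (DVar n m) K :=
      fun x => if x ∈ s' then a' x else 0 with hA
    set B : MvPolynomial (DVar n m) K × Shift n → MvPolynomial (DVar n m) K :=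
      fun x => if x = (g, θ) then MvPolynomial.monomial t c else 0 with hB
    refine ⟨insert (g, θ) s', fun x => A x + B x, ?_, ?_⟩
    · intro x hx
      by_cases hxg : x = (g, θ)
      · subst hxg
        have hBx : B (g, θ) = MvPolynomial.monomial t c := if_pos rfl
        by_cases hgs : ((g, θ) : MvPolynomial (DVar n m) K × Shift n) ∈ s'
        · have hAx : A (g, θ) = a' (g, θ) := if_pos hgs
          obtain ⟨_, ha'ne, l', hl', hor'⟩ := hcond' (g, θ) hgs
          have hl'lf : ord.lt l' lf := by
            rcases hor' with rfl | hlt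
            · exact hlt''
            · exact ord.trans _ _ _ hlt hlt''
          have hl'lt : ∀ u ∈ (a' (g, θ) * sigmaR σK θ g).support, ord.lt u lf := by
            intro u hu
            by_cases he : u = l'
            · rw [he]; exact hl'lf
            · exact ord.trans _ _ _ (hl'.2 u hu he) hl'lf
          set p := a' (g, θ) * sigmaR σK θ g + MvPolynomial.monomial t c * sigmaR σK θ g
            with hp
          have hpco : p.coeff lf = c := by
            rw [hp, MvPolynomial.coeff_add, hhco]
            have hz : (a' (g, θ) * sigmaR σK θ g).coeff lf = 0 := by
              by_contra h0
              exact ord.irrefl lf (hl'lt lf (MvPolynomial.mem_support_iff.2 h0))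
            rw [hz, zero_add]
          have hplm : IsLm ord p lf := by
            constructor
            · exact MvPolynomial.mem_support_iff.2 (by rw [hpco]; exact hcne)
            · intro u hu hune
              have hcoe : p.coeff u ≠ 0 := MvPolynomial.mem_support_iff.1 hu
              by_cases h1 : (a' (g, θ) * sigmaR σK θ g).coeff u ≠ 0
              · exact hl'lt u (MvPolynomial.mem_support_iff.2 h1)
              · push_neg at h1
                have h2 : (MvPolynomial.monomial t c * sigmaR σK θ g).coeff u ≠ 0 := by
                  intro h2
                  exact hcoe (by rw [hp, MvPolynomial.coeff_add, h1, h2, add_zero])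
                exact hhlm0.2 u (MvPolynomial.mem_support_iff.2 h2) hune
          have hpeq : (A (g, θ) + B (g, θ)) * sigmaR σK θ g = p := by
            rw [hAx, hBx, hp, add_mul]
          refine ⟨hgG, ?_, lf, ?_, Or.inl rfl⟩
          · intro h0
            have hp0 : p = 0 := by
              rw [← hpeq]
              have : A (g, θ) + B (g, θ) = 0 := h0
              rw [this, zero_mul]
            rw [hp0] at hplm
            have := hplm.1
            simp at this
          · show IsLm ord ((A (g, θ) + B (g, θ)) * sigmaR σK θ g) lf
            rw [hpeq]
            exact hplm
        · have hAx : A (g, θ) = 0 := if_neg hgs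
          have heq : A (g, θ) + B (g, θ) = MvPolynomial.monomial t c := by
            rw [hAx, hBx, zero_add]
          refine ⟨hgG, ?_, lf, ?_, Or.inl rfl⟩
          · show A (g, θ) + B (g, θ) ≠ 0
            rw [heq]
            intro h0
            exact hcne (by rwa [MvPolynomial.monomial_eq_zero] at h0)
          · show IsLm ord ((A (g, θ) + B (g, θ)) * sigmaR σK θ g) lf
            rw [heq]
            exact hhlm0
      · have hxs : x ∈ s' := (Finset.mem_insert.1 hx).resolve_left hxg
        have hBx : B x = 0 := if_neg hxg
        have hAx : A x = a' x := if_pos hxs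
        obtain ⟨hxG, hane, l, hl, hor⟩ := hcond' x hxs
        have heq : A x + B x = a' x := by rw [hAx, hBx, add_zero]
        refine ⟨hxG, ?_, l, ?_, Or.inr ?_⟩
        · show A x + B x ≠ 0
          rw [heq]; exact hane
        · show IsLm ord ((A x + B x) * sigmaR σK x.2 x.1) l
          rw [heq]; exact hl
        · rcases hor with rfl | hlt
          · exact hlt''
          · exact ord.trans _ _ _ hlt hlt''
    · have h1 : ∑ x ∈ insert (g, θ) s', A x * sigmaR σK x.2 x.1
          = ∑ x ∈ s', a' x * sigmaR σK x.2 x.1 := by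
        rw [← Finset.sum_subset (Finset.subset_insert (g, θ) s')
          (fun x _ hxs => by simp only [hA, if_neg hxs, zero_mul])]
        exact Finset.sum_congr rfl fun x hx => by simp only [hA, if_pos hx]
      have h2 : ∑ x ∈ insert (g, θ) s', B x * sigmaR σK x.2 x.1
          = MvPolynomial.monomial t c * sigmaR σK θ g := by
        rw [Finset.sum_eq_single_of_mem (g, θ) (Finset.mem_insert_self _ _)
          (fun x _ hxne => by simp only [hB, if_neg hxne, zero_mul])]
        simp only [hB, if_pos rfl]
      calc f = f' + MvPolynomial.monomial t c * sigmaR σK θ g := by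
              rw [hf'def]; ring
        _ = (∑ x ∈ s', a' x * sigmaR σK x.2 x.1)
              + MvPolynomial.monomial t c * sigmaR σK θ g := by rw [hsum']
        _ = ∑ x ∈ insert (g, θ) s', (A x + B x) * sigmaR σK x.2 x.1 := by
              rw [← h1, ← h2, ← Finset.sum_add_distrib]
              exact Finset.sum_congr rfl fun x _ => (add_mul _ _ _).symm
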